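/- If the null p-values are independent of each other and of the non-null p-values, each null p-value is super-uniform (P(P_j ≤ u) ≤ u for all u ∈ [0,1]), the level sequence {α_t} is monotone, and FDP*(t) ≤ α almost surely for all t ∈ ℕ, then FDR(t) ≤ α for all t ∈ ℕ. (Proposition 1(d)) -/

import Mathlib

open MeasureTheory ProbabilityTheory

/-- The rejection indicator history available just before testing hypothesis `t`:
the indicators `R_j = 1{P_j ≤ α_j}` for `j < t`, encoded as a boolean sequence. -/
noncomputable def rejHistory {Ω : Type*} (P alpha : ℕ → Ω → ℝ) (t : ℕ) (ω : Ω) : ℕ → Bool :=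
  fun j => decide (j < t ∧ P j ω ≤ alpha j ω)

/-- The number of rejections `|R(t)|` among the hypotheses indexed `j ≤ t`. -/
noncomputable def numRejections {Ω : Type*} (P alpha : ℕ → Ω → ℝ) (t : ℕ) (ω : Ω) : ℝ :=
  ∑ j ∈ Finset.Iic t, if P j ω ≤ alpha j ω then (1 : ℝ) else 0

open Classical in
/-- The number of false rejections `|H⁰ ∩ R(t)|` among the hypotheses indexed `j ≤ t`. -/
noncomputable def numFalseRejections {Ω : Type*} (H0 : Set ℕ) (P alpha : ℕ → Ω → ℝ)
    (t : ℕ) (ω : Ω) : ℝ :=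
  ∑ j ∈ Finset.Iic t, if j ∈ H0 ∧ P j ω ≤ alpha j ω then (1 : ℝ) else 0

/-- The false discovery proportion `FDP(t) = |H⁰ ∩ R(t)| / max(|R(t)|, 1)`. -/
noncomputable def FDP {Ω : Type*} (H0 : Set ℕ) (P alpha : ℕ → Ω → ℝ) (t : ℕ) (ω : Ω) : ℝ :=
  numFalseRejections H0 P alpha t ω / max (numRejections P alpha t ω) 1

open Classical in
/-- The oracle FDP estimate `FDP*(t) = (Σ_{j ≤ t, j ∈ H⁰} α_j) / max(|R(t)|, 1)`. -/
noncomputable def FDPstar {Ω : Type*} (H0 : Set ℕ) (P alpha : ℕ → Ω → ℝ)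
    (t : ℕ) (ω : Ω) : ℝ :=
  (∑ j ∈ Finset.Iic t, if j ∈ H0 then alpha j ω else 0) / max (numRejections P alpha t ω) 1

/-- The null p-values `{P_j : j ∈ H⁰}` are independent of each other and of
the non-null p-values: the family of σ-algebras consisting of `σ(P_j)` for each null `j`,
together with the σ-algebra generated by all non-null p-values, is independent. -/
def nullsIndep {Ω : Type*} [MeasurableSpace Ω] (μ : Measure Ω) (H0 : Set ℕ)
    (P : ℕ → Ω → ℝ) : Prop :=
  ProbabilityTheory.iIndep
    (fun i : Option {j : ℕ // j ∈ H0} =>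
      i.elim (⨆ j ∈ H0ᶜ, MeasurableSpace.comap (P j) inferInstance)
        (fun j => MeasurableSpace.comap (P j.1) inferInstance)) μ

section Aux

variable {Ω : Type*}

noncomputable def procRej (f : ℕ → (ℕ → Bool) → ℝ) (Q : ℕ → Ω → ℝ) (i : ℕ) (ω : Ω) : Bool :=
  decide (Q i ω ≤ f i (fun k => if _h : k < i then procRej f Q k ω else false))
termination_by i
decreasing_by all_goals omega

noncomputable def procHist (f : ℕ → (ℕ → Bool) → ℝ) (Q : ℕ → Ω → ℝ) (i : ℕ) (ω : Ω) : ℕ → Bool :=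
  fun k => if _h : k < i then procRej f Q k ω else false

lemma procRej_def (f : ℕ → (ℕ → Bool) → ℝ) (Q : ℕ → Ω → ℝ) (i : ℕ) (ω : Ω) :
    procRej f Q i ω = decide (Q i ω ≤ f i (procHist f Q i ω)) := by
  rw [procRej]; rfl

lemma procRej_congr (f : ℕ → (ℕ → Bool) → ℝ) {Q Q' : ℕ → Ω → ℝ} {ω : Ω} :
    ∀ i, (∀ k ≤ i, Q k ω = Q' k ω) → procRej f Q i ω = procRej f Q' i ω := by
  intro i
  induction i using Nat.strong_induction_on with
  | _ i ih =>
    intro h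
    rw [procRej_def, procRej_def]
    have hh : procHist f Q i ω = procHist f Q' i ω := by
      funext k
      unfold procHist
      split
      · exact ih k (by assumption) (fun m hm => h m (le_of_lt (lt_of_le_of_lt hm (by assumption))))
      · rfl
    rw [hh, h i le_rfl]

lemma procHist_congr (f : ℕ → (ℕ → Bool) → ℝ) {Q Q' : ℕ → Ω → ℝ} {ω : Ω} {i : ℕ}
    (h : ∀ k < i, Q k ω = Q' k ω) : procHist f Q i ω = procHist f Q' i ω := by
  funext k
  unfold procHist
  split
  · exact procRej_congr f k (fun m hm => h m (lt_of_le_of_lt hm (by assumption)))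
  · rfl

lemma procRej_mono (f : ℕ → (ℕ → Bool) → ℝ) (hmono : ∀ n, Monotone (f n))
    {Q Q' : ℕ → Ω → ℝ} {ω : Ω} (hQ : ∀ k, Q' k ω ≤ Q k ω) :
    ∀ i, procRej f Q i ω ≤ procRej f Q' i ω := by
  intro i
  induction i using Nat.strong_induction_on with
  | _ i ih =>
    rw [procRej_def, procRej_def]
    have hh : procHist f Q i ω ≤ procHist f Q' i ω := by
      intro k
      unfold procHist
      split
      · exact ih k (by assumption)
      · exact le_rfl
    have hf := hmono i hh
    by_cases hd : Q i ω ≤ f i (procHist f Q i ω)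
    · have : Q' i ω ≤ f i (procHist f Q' i ω) := le_trans (hQ i) (le_trans hd hf)
      simp [hd, this]
    · simp [hd]

lemma procRej_eq_of_eq_at (f : ℕ → (ℕ → Bool) → ℝ) {Q Q' : ℕ → Ω → ℝ} {ω : Ω} {j : ℕ}
    (hQ : ∀ k, k ≠ j → Q k ω = Q' k ω) (hj : procRej f Q j ω = procRej f Q' j ω) :
    ∀ i, procRej f Q i ω = procRej f Q' i ω := by
  intro i
  induction i using Nat.strong_induction_on with
  | _ i ih =>
    by_cases hij : i = j
    · subst hij; exact hj
    · rw [procRej_def, procRej_def]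
      have hh : procHist f Q i ω = procHist f Q' i ω := by
        funext k
        unfold procHist
        split
        · exact ih k (by assumption)
        · rfl
      rw [hh, hQ i hij]

lemma procRej_actual {P alpha : ℕ → Ω → ℝ} {f : ℕ → (ℕ → Bool) → ℝ}
    (hpred : ∀ t ω, alpha t ω = f t (rejHistory P alpha t ω)) (ω : Ω) :
    ∀ i, procRej f P i ω = decide (P i ω ≤ alpha i ω) := by
  intro i
  induction i using Nat.strong_induction_on with
  | _ i ih =>
    rw [procRej_def]
    have hh : procHist f P i ω = rejHistory P alpha i ω := by
      funext k
      unfold procHist rejHistory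
      split
      · rename_i hk
        rw [ih k hk]
        simp [hk]
      · rename_i hk
        simp [hk]
    rw [hh, ← hpred i ω]

lemma procHist_actual {P alpha : ℕ → Ω → ℝ} {f : ℕ → (ℕ → Bool) → ℝ}
    (hpred : ∀ t ω, alpha t ω = f t (rejHistory P alpha t ω)) (ω : Ω) (i : ℕ) :
    procHist f P i ω = rejHistory P alpha i ω := by
  funext k
  unfold procHist rejHistory
  split
  · rename_i hk
    rw [procRej_actual hpred ω k]
    simp [hk]
  · rename_i hk
    simp [hk]

lemma procRej_measurable {G : MeasurableSpace Ω} (f : ℕ → (ℕ → Bool) → ℝ)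
    (Q : ℕ → Ω → ℝ) (hQ : ∀ k, Measurable[G] (Q k)) :
    ∀ i, Measurable[G] (procRej f Q i) := by
  intro i
  induction i using Nat.strong_induction_on with
  | _ i ih =>
    have hL : Measurable[G] (fun ω => f i (procHist f Q i ω)) := by
      have hvec : Measurable[G] (fun ω (k : Fin i) => procRej f Q k.1 ω) :=
        measurable_pi_lambda _ (fun k => ih k.1 k.2)
      have heq : (fun ω => f i (procHist f Q i ω))
          = (fun v : Fin i → Bool => f i (fun k => if h : k < i then v ⟨k, h⟩ else false))
            ∘ (fun ω (k : Fin i) => procRej f Q k.1 ω) := by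
        funext ω
        rfl
      rw [heq]
      exact (measurable_of_countable _).comp hvec
    have hset : MeasurableSet[G] {ω | Q i ω ≤ f i (procHist f Q i ω)} :=
      measurableSet_le (hQ i) hL
    have heq2 : procRej f Q i = fun ω => decide (Q i ω ≤ f i (procHist f Q i ω)) := by
      funext ω; rw [procRej_def]
    rw [heq2]
    apply measurable_to_countable'
    intro b
    cases b
    · convert hset.compl using 1
      ext ω
      simp
    · convert hset using 1
      ext ω
      simp


end Aux

noncomputable def otherSigma {Ω : Type*} (P : ℕ → Ω → ℝ) (i : ℕ) : MeasurableSpace Ω :=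
  ⨆ k ∈ ({i}ᶜ : Set ℕ), MeasurableSpace.comap (P k) inferInstance

lemma key_step {Ω : Type*} [m0 : MeasurableSpace Ω] (μ : Measure Ω) [IsProbabilityMeasure μ]
    (P alpha : ℕ → Ω → ℝ) (H0 : Set ℕ)
    (hPmeas : ∀ j, Measurable (P j)) (hP01 : ∀ j ω, P j ω ∈ Set.Icc (0:ℝ) 1)
    (hameas : ∀ j, Measurable (alpha j)) (ha01 : ∀ j ω, alpha j ω ∈ Set.Ioo (0:ℝ) 1)
    (hindep : nullsIndep μ H0 P)
    (hnull : ∀ j ∈ H0, ∀ u ∈ Set.Icc (0:ℝ) 1, μ {ω | P j ω ≤ u} ≤ ENNReal.ofReal u)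
    (f : ℕ → (ℕ → Bool) → ℝ)
    (hpred : ∀ t ω, alpha t ω = f t (rejHistory P alpha t ω))
    (hmono : ∀ t, Monotone (f t))
    (t i : ℕ) (hi : i ∈ H0) (hit : i ≤ t) :
    ∫ ω, (if P i ω ≤ alpha i ω then (1:ℝ) else 0) / max (numRejections P alpha t ω) 1 ∂μ
      ≤ ∫ ω, alpha i ω / max (numRejections P alpha t ω) 1 ∂μ := by
  classical
  -- hallucinated p-values
  set Qh : ℕ → Ω → ℝ := fun k => if k = i then (fun _ => (0:ℝ)) else P k with hQhdef
  have hQP : ∀ (ω : Ω) (k : ℕ), k ≠ i → Qh k ω = P k ω := by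
    intro ω k hk
    show (if k = i then (fun _ => (0:ℝ)) else P k) ω = P k ω
    rw [if_neg hk]
  have hQi : ∀ ω : Ω, Qh i ω = 0 := by
    intro ω
    show (if i = i then (fun _ => (0:ℝ)) else P i) ω = 0
    rw [if_pos rfl]
  have hQle : ∀ (ω : Ω) (k : ℕ), Qh k ω ≤ P k ω := by
    intro ω k
    by_cases hk : k = i
    · subst hk; rw [hQi ω]; exact (hP01 k ω).1
    · rw [hQP ω k hk]
  -- the sigma-algebra generated by the other p-values
  have hGle : otherSigma P i ≤ m0 := by
    unfold otherSigma
    apply iSup₂_le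
    intro k _
    exact (hPmeas k).comap_le
  have hQmeasG : ∀ k, Measurable[otherSigma P i] (Qh k) := by
    intro k
    by_cases hk : k = i
    · subst hk; simp only [hQhdef, if_pos rfl]; exact measurable_const
    · have h1 : Measurable[MeasurableSpace.comap (P k) inferInstance] (P k) :=
        Measurable.of_comap_le le_rfl
      have h2 : MeasurableSpace.comap (P k) inferInstance ≤ otherSigma P i := by
        unfold otherSigma
        exact le_biSup (f := fun k => MeasurableSpace.comap (P k) inferInstance)
          (show k ∈ ({i}ᶜ : Set ℕ) from hk)
      simp only [hQhdef, if_neg hk]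
      exact h1.mono h2 le_rfl
  have hrejG : ∀ k, Measurable[otherSigma P i] (procRej f Qh k) := procRej_measurable f Qh hQmeasG
  -- independence of P i from G
  have hIndepiG : Indep (MeasurableSpace.comap (P i) inferInstance) (otherSigma P i) μ := by
    set m : Option {j : ℕ // j ∈ H0} → MeasurableSpace Ω :=
      fun o => o.elim (⨆ j ∈ H0ᶜ, MeasurableSpace.comap (P j) inferInstance)
        (fun j => MeasurableSpace.comap (P j.1) inferInstance) with hmdef
    have h_le : ∀ n, m n ≤ m0 := by
      rintro (_ | j)
      · exact iSup₂_le fun k _ => (hPmeas k).comap_le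
      · exact (hPmeas j.1).comap_le
    have hI := ProbabilityTheory.indep_biSup_compl h_le hindep {Option.some ⟨i, hi⟩}
    refine indep_of_indep_of_le_right (indep_of_indep_of_le_left hI ?_) ?_
    · exact le_biSup (f := m)
        (show Option.some ⟨i, hi⟩ ∈ ({Option.some ⟨i, hi⟩} : Set (Option {j // j ∈ H0})) from rfl)
    · unfold otherSigma
      apply iSup₂_le
      intro k hk
      have hki : k ≠ i := hk
      by_cases hkH : k ∈ H0
      · have : MeasurableSpace.comap (P k) inferInstance = m (Option.some ⟨k, hkH⟩) := rfl
        rw [this]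
        apply le_biSup m
        simp only [Set.mem_compl_iff, Set.mem_singleton_iff]
        intro hcon
        exact hki (by injection hcon with h'; exact congrArg Subtype.val h')
      · have h1 : MeasurableSpace.comap (P k) inferInstance ≤ m Option.none :=
          le_biSup (f := fun j => MeasurableSpace.comap (P j) inferInstance)
            (show k ∈ H0ᶜ from hkH)
        refine h1.trans (le_biSup m ?_)
        simp
  have hprod : ∀ (u : ℝ) (E : Set Ω), MeasurableSet[otherSigma P i] E →
      μ ({ω | P i ω ≤ u} ∩ E) = μ {ω | P i ω ≤ u} * μ E := by
    intro u E hE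
    exact (Indep_iff _ _ _).1 hIndepiG _ _ ⟨Set.Iic u, measurableSet_Iic, rfl⟩ hE
  -- pointwise identities
  have hRejP : ∀ (ω : Ω) (k : ℕ), procRej f P k ω = decide (P k ω ≤ alpha k ω) :=
    fun ω => procRej_actual hpred ω
  have hfL : ∀ ω : Ω, f i (procHist f Qh i ω) = alpha i ω := by
    intro ω
    have h1 : procHist f Qh i ω = procHist f P i ω :=
      procHist_congr f (fun k hk => hQP ω k (Nat.ne_of_lt hk))
    rw [h1, procHist_actual hpred ω i, ← hpred i ω]
  have hRejQi : ∀ ω : Ω, procRej f Qh i ω = true := by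
    intro ω
    rw [procRej_def, hQi ω, hfL ω]
    simp [le_of_lt (ha01 i ω).1]
  have hcnt_le : ∀ ω : Ω, numRejections P alpha t ω
      ≤ ∑ k ∈ Finset.Iic t, (if procRej f Qh k ω then (1:ℝ) else 0) := by
    intro ω
    unfold numRejections
    apply Finset.sum_le_sum
    intro k _
    by_cases hk : P k ω ≤ alpha k ω
    · have h1 : procRej f P k ω = true := by rw [hRejP]; simp [hk]
      have h2 := procRej_mono f hmono (hQle ω) k
      have h3 : procRej f Qh k ω = true := le_antisymm (Bool.le_true _) (h1 ▸ h2)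
      simp [hk, h3]
    · simp only [if_neg hk]
      split <;> norm_num
  have hcnt_eq : ∀ ω : Ω, P i ω ≤ alpha i ω → numRejections P alpha t ω
      = ∑ k ∈ Finset.Iic t, (if procRej f Qh k ω then (1:ℝ) else 0) := by
    intro ω hev
    have hji : procRej f P i ω = procRej f Qh i ω := by
      rw [hRejQi ω, hRejP ω i]
      simp [hev]
    have hall := procRej_eq_of_eq_at f (fun k hk => (hQP ω k hk).symm) hji
    unfold numRejections
    apply Finset.sum_congr rfl
    intro k _
    rw [← hall k, hRejP ω k]
    by_cases hc : P k ω ≤ alpha k ω <;> simp [hc]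
  -- the partition into hallucinated-rejection configurations
  set vec : Ω → (Fin (t+1) → Bool) := fun ω k => procRej f Qh k.1 ω with hvecdef
  have hvecG : Measurable[otherSigma P i] vec :=
    @measurable_pi_lambda Ω (Fin (t+1)) (fun _ => Bool) (otherSigma P i)
      (fun _ => inferInstance) vec (fun k => hrejG k.1)
  set exth : (Fin (t+1) → Bool) → ℕ → Bool :=
    fun h k => if hk : k < t+1 then h ⟨k, hk⟩ else false with hexthdef
  set uh : (Fin (t+1) → Bool) → ℝ :=
    fun h => f i (fun k => if k < i then exth h k else false) with huhdef
  set Dh : (Fin (t+1) → Bool) → ℝ :=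
    fun h => max (∑ k ∈ Finset.Iic t, if exth h k then (1:ℝ) else 0) 1 with hDhdef
  have hEG : ∀ h, MeasurableSet[otherSigma P i] (vec ⁻¹' {h}) :=
    fun h => hvecG (measurableSet_singleton h)
  have he1 : ∀ (ω : Ω) (k : ℕ), k ≤ t → exth (vec ω) k = procRej f Qh k ω := by
    intro ω k hk
    have hk' : k < t + 1 := Nat.lt_succ_of_le hk
    simp only [hexthdef, dif_pos hk']
    rfl
  have he2 : ∀ ω : Ω, uh (vec ω) = alpha i ω := by
    intro ω
    rw [← hfL ω]
    simp only [huhdef]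
    congr 1
    funext k
    unfold procHist
    by_cases hk : k < i
    · rw [if_pos hk, dif_pos hk, he1 ω k (le_trans (Nat.le_of_lt_succ (Nat.lt_succ_of_lt hk)) hit)]
    · rw [if_neg hk, dif_neg hk]
  have he3 : ∀ ω : Ω, Dh (vec ω)
      = max (∑ k ∈ Finset.Iic t, if procRej f Qh k ω then (1:ℝ) else 0) 1 := by
    intro ω
    simp only [hDhdef]
    congr 1
    apply Finset.sum_congr rfl
    intro k hk
    rw [he1 ω k (Finset.mem_Iic.1 hk)]
  -- representation of the left-hand side
  have hrep1 : (fun ω => (if P i ω ≤ alpha i ω then (1:ℝ) else 0)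
        / max (numRejections P alpha t ω) 1)
      = fun ω => ∑ h : Fin (t+1) → Bool,
          Set.indicator (vec ⁻¹' {h} ∩ {ω' | P i ω' ≤ uh h}) (fun _ => 1 / Dh h) ω := by
    funext ω
    rw [Finset.sum_eq_single_of_mem (vec ω) (Finset.mem_univ _)]
    · rw [Set.indicator_apply]
      by_cases hc : P i ω ≤ alpha i ω
      · have hmem : ω ∈ vec ⁻¹' {vec ω} ∩ {ω' | P i ω' ≤ uh (vec ω)} := by
          constructor
          · exact rfl
          · rw [Set.mem_setOf_eq, he2 ω]; exact hc
        rw [if_pos hmem, if_pos hc, he3 ω, ← hcnt_eq ω hc]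
      · have hmem : ω ∉ vec ⁻¹' {vec ω} ∩ {ω' | P i ω' ≤ uh (vec ω)} := by
          intro hmem
          exact hc (by rw [← he2 ω]; exact hmem.2)
        rw [if_neg hmem, if_neg hc, zero_div]
    · intro h _ hne
      apply Set.indicator_of_notMem
      intro hmem
      exact hne (Set.mem_singleton_iff.1 hmem.1).symm
  -- representation of the intermediate function
  have hrep2 : (fun ω => alpha i ω
        / max (∑ k ∈ Finset.Iic t, if procRej f Qh k ω then (1:ℝ) else 0) 1)
      = fun ω => ∑ h : Fin (t+1) → Bool,
          Set.indicator (vec ⁻¹' {h}) (fun _ => uh h / Dh h) ω := by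
    funext ω
    rw [Finset.sum_eq_single_of_mem (vec ω) (Finset.mem_univ _)]
    · rw [Set.indicator_of_mem (by exact rfl : ω ∈ vec ⁻¹' {vec ω}), he2 ω, he3 ω]
    · intro h _ hne
      apply Set.indicator_of_notMem
      intro hmem
      exact hne (Set.mem_singleton_iff.1 hmem).symm
  -- measurability and integrability facts
  have hSm0 : ∀ u : ℝ, MeasurableSet {ω | P i ω ≤ u} :=
    fun u => measurableSet_le (hPmeas i) measurable_const
  have hEm0 : ∀ h : Fin (t+1) → Bool, MeasurableSet (vec ⁻¹' {h}) := fun h => hGle _ (hEG h)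
  have hcntHmeas : Measurable (fun ω => ∑ k ∈ Finset.Iic t,
      if procRej f Qh k ω then (1:ℝ) else 0) := by
    apply Finset.measurable_sum
    intro k _
    have h1 : Measurable[otherSigma P i] (fun ω => if procRej f Qh k ω then (1:ℝ) else 0) :=
      (measurable_of_countable (fun b : Bool => if b then (1:ℝ) else 0)).comp (hrejG k)
    exact h1.mono hGle le_rfl
  have hcntmeas : Measurable (fun ω => numRejections P alpha t ω) := by
    unfold numRejections
    apply Finset.measurable_sum
    intro k _
    exact Measurable.ite (measurableSet_le (hPmeas k) (hameas k))
      measurable_const measurable_const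
  have hintbl : ∀ (g : Ω → ℝ), Measurable g → (∀ ω, |g ω| ≤ 1) → Integrable g μ := by
    intro g hg hb
    exact (integrable_const 1).mono' hg.aestronglyMeasurable
      (Filter.Eventually.of_forall (by simpa [Real.norm_eq_abs] using hb))
  -- integral of the left-hand side
  have hint1 : ∫ ω, (if P i ω ≤ alpha i ω then (1:ℝ) else 0)
        / max (numRejections P alpha t ω) 1 ∂μ
      = ∑ h : Fin (t+1) → Bool,
          (μ (vec ⁻¹' {h} ∩ {ω' | P i ω' ≤ uh h})).toReal • (1 / Dh h) := by
    rw [hrep1, integral_finset_sum]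
    · apply Finset.sum_congr rfl
      intro h _
      exact integral_indicator_const _ ((hEm0 h).inter (hSm0 (uh h)))
    · intro h _
      exact (integrable_const _).indicator ((hEm0 h).inter (hSm0 (uh h)))
  have hint2 : ∫ ω, alpha i ω
        / max (∑ k ∈ Finset.Iic t, if procRej f Qh k ω then (1:ℝ) else 0) 1 ∂μ
      = ∑ h : Fin (t+1) → Bool,
          (μ (vec ⁻¹' {h})).toReal • (uh h / Dh h) := by
    rw [hrep2, integral_finset_sum]
    · apply Finset.sum_congr rfl
      intro h _
      exact integral_indicator_const _ (hEm0 h)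
    · intro h _
      exact (integrable_const _).indicator (hEm0 h)
  -- the per-configuration inequality
  have hperh : ∀ h : Fin (t+1) → Bool,
      (μ (vec ⁻¹' {h} ∩ {ω' | P i ω' ≤ uh h})).toReal • (1 / Dh h)
      ≤ (μ (vec ⁻¹' {h})).toReal • (uh h / Dh h) := by
    intro h
    rw [smul_eq_mul, smul_eq_mul]
    have hDh1 : (1:ℝ) ≤ Dh h := le_max_right _ _
    have hDhpos : (0:ℝ) < Dh h := lt_of_lt_of_le one_pos hDh1
    by_cases hE0 : μ (vec ⁻¹' {h}) = 0
    · have h0 : μ (vec ⁻¹' {h} ∩ {ω' | P i ω' ≤ uh h}) = 0 :=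
        measure_mono_null Set.inter_subset_left hE0
      rw [h0, hE0]
      simp
    · obtain ⟨ω₀, hω₀⟩ := nonempty_of_measure_ne_zero hE0
      have hveq : vec ω₀ = h := hω₀
      have hu : uh h = alpha i ω₀ := by rw [← hveq]; exact he2 ω₀
      have hu0 : (0:ℝ) < uh h := hu ▸ (ha01 i ω₀).1
      have hu1 : uh h ≤ 1 := hu ▸ le_of_lt (ha01 i ω₀).2
      have hμS : μ {ω | P i ω ≤ uh h} ≤ ENNReal.ofReal (uh h) :=
        hnull i hi _ ⟨hu0.le, hu1⟩
      have hSr : (μ {ω | P i ω ≤ uh h}).toReal ≤ uh h :=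
        ENNReal.toReal_le_of_le_ofReal hu0.le hμS
      have hmul : μ (vec ⁻¹' {h} ∩ {ω' | P i ω' ≤ uh h})
          = μ {ω | P i ω ≤ uh h} * μ (vec ⁻¹' {h}) := by
        rw [Set.inter_comm]
        exact hprod (uh h) _ (hEG h)
      rw [hmul, ENNReal.toReal_mul]
      calc (μ {ω | P i ω ≤ uh h}).toReal * (μ (vec ⁻¹' {h})).toReal * (1 / Dh h)
          ≤ uh h * (μ (vec ⁻¹' {h})).toReal * (1 / Dh h) := by
            apply mul_le_mul_of_nonneg_right _ (by positivity)
            exact mul_le_mul_of_nonneg_right hSr ENNReal.toReal_nonneg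
        _ = (μ (vec ⁻¹' {h})).toReal * (uh h / Dh h) := by ring
  -- put everything together
  calc ∫ ω, (if P i ω ≤ alpha i ω then (1:ℝ) else 0)
        / max (numRejections P alpha t ω) 1 ∂μ
      = ∑ h : Fin (t+1) → Bool,
          (μ (vec ⁻¹' {h} ∩ {ω' | P i ω' ≤ uh h})).toReal • (1 / Dh h) := hint1
    _ ≤ ∑ h : Fin (t+1) → Bool, (μ (vec ⁻¹' {h})).toReal • (uh h / Dh h) :=
        Finset.sum_le_sum (fun h _ => hperh h)
    _ = ∫ ω, alpha i ω
          / max (∑ k ∈ Finset.Iic t, if procRej f Qh k ω then (1:ℝ) else 0) 1 ∂μ := hint2.symm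
    _ ≤ ∫ ω, alpha i ω / max (numRejections P alpha t ω) 1 ∂μ := by
        apply integral_mono
        · apply hintbl _ ((hameas i).div (hcntHmeas.max measurable_const))
          intro ω
          simp only [Pi.div_apply]
          have h1 : (1:ℝ) ≤ max (∑ k ∈ Finset.Iic t,
              if procRej f Qh k ω then (1:ℝ) else 0) 1 := le_max_right _ _
          have h0 : (0:ℝ) < max (∑ k ∈ Finset.Iic t,
              if procRej f Qh k ω then (1:ℝ) else 0) 1 := lt_of_lt_of_le one_pos h1
          rw [abs_le]
          constructor
          · have := div_nonneg (le_of_lt (ha01 i ω).1) h0.le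
            linarith
          · rw [div_le_one h0]
            exact le_trans (le_of_lt (ha01 i ω).2) h1
        · apply hintbl _ ((hameas i).div (hcntmeas.max measurable_const))
          intro ω
          simp only [Pi.div_apply]
          have h1 : (1:ℝ) ≤ max (numRejections P alpha t ω) 1 := le_max_right _ _
          have h0 : (0:ℝ) < max (numRejections P alpha t ω) 1 := lt_of_lt_of_le one_pos h1
          rw [abs_le]
          constructor
          · have := div_nonneg (le_of_lt (ha01 i ω).1) h0.le
            linarith
          · rw [div_le_one h0]
            exact le_trans (le_of_lt (ha01 i ω).2) h1
        · intro ω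
          exact div_le_div_of_nonneg_left (le_of_lt (ha01 i ω).1)
            (lt_of_lt_of_le one_pos (le_max_right _ _))
            (max_le_max (hcnt_le ω) le_rfl)


/-- Proposition 1(d): if the null p-values are independent of each other and of the
non-nulls, each null p-value is super-uniform, the level sequence is monotone, and
`FDP*(t) ≤ α` almost surely for all `t`, then `FDR(t) ≤ α` for all `t`. -/
theorem proposition1d {Ω : Type*} [m0 : MeasurableSpace Ω]
    (μ : Measure Ω) [IsProbabilityMeasure μ]
    (P alpha : ℕ → Ω → ℝ) (H0 : Set ℕ)
    (hPmeas : ∀ j, Measurable (P j)) (hP01 : ∀ j ω, P j ω ∈ Set.Icc (0 : ℝ) 1)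
    (hameas : ∀ j, Measurable (alpha j)) (ha01 : ∀ j ω, alpha j ω ∈ Set.Ioo (0 : ℝ) 1)
    -- independence of the nulls from each other and from the non-nulls
    (hindep : nullsIndep μ H0 P)
    -- marginal super-uniformity of each null p-value
    (hnull : ∀ j ∈ H0, ∀ u ∈ Set.Icc (0 : ℝ) 1, μ {ω | P j ω ≤ u} ≤ ENNReal.ofReal u)
    -- predictability and monotonicity of the level sequence
    (f : ℕ → (ℕ → Bool) → ℝ)
    (hpred : ∀ t ω, alpha t ω = f t (rejHistory P alpha t ω))
    (hmono : ∀ t, Monotone (f t))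
    -- target level and almost-sure control of the oracle FDP estimate
    (q : ℝ) (hq : q ∈ Set.Ioo (0 : ℝ) 1)
    (hFDPstar : ∀ t : ℕ, ∀ᵐ ω ∂μ, FDPstar H0 P alpha t ω ≤ q)
    (t : ℕ) :
    ∫ ω, FDP H0 P alpha t ω ∂μ ≤ q := by
  classical
  have hD1 : ∀ ω : Ω, (1:ℝ) ≤ max (numRejections P alpha t ω) 1 := fun ω => le_max_right _ _
  have hD0 : ∀ ω : Ω, (0:ℝ) < max (numRejections P alpha t ω) 1 :=
    fun ω => lt_of_lt_of_le one_pos (hD1 ω)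
  have hcntmeas : Measurable (fun ω => numRejections P alpha t ω) := by
    unfold numRejections
    apply Finset.measurable_sum
    intro k _
    exact Measurable.ite (measurableSet_le (hPmeas k) (hameas k))
      measurable_const measurable_const
  have hDmeas : Measurable (fun ω => max (numRejections P alpha t ω) 1) :=
    hcntmeas.max measurable_const
  have hintbl : ∀ (g : Ω → ℝ), Measurable g → (∀ ω, |g ω| ≤ 1) → Integrable g μ := by
    intro g hg hb
    exact (integrable_const 1).mono' hg.aestronglyMeasurable
      (Filter.Eventually.of_forall (by simpa [Real.norm_eq_abs] using hb))
  -- integrability of each summand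
  have hterm1 : ∀ k, Integrable (fun ω =>
      (if k ∈ H0 ∧ P k ω ≤ alpha k ω then (1:ℝ) else 0)
        / max (numRejections P alpha t ω) 1) μ := by
    intro k
    apply hintbl
    · apply Measurable.div _ hDmeas
      by_cases hk : k ∈ H0
      · simp only [hk, true_and]
        exact Measurable.ite (measurableSet_le (hPmeas k) (hameas k))
          measurable_const measurable_const
      · simp only [hk, false_and, if_false]
        exact measurable_const
    · intro ω
      rw [abs_div, abs_of_pos (hD0 ω), div_le_one (hD0 ω)]
      refine le_trans ?_ (hD1 ω)
      split <;> simp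
  have hterm2 : ∀ k, Integrable (fun ω =>
      (if k ∈ H0 then alpha k ω else 0) / max (numRejections P alpha t ω) 1) μ := by
    intro k
    apply hintbl
    · apply Measurable.div _ hDmeas
      by_cases hk : k ∈ H0
      · simp only [hk, if_true]; exact hameas k
      · simp only [hk, if_false]; exact measurable_const
    · intro ω
      rw [abs_div, abs_of_pos (hD0 ω), div_le_one (hD0 ω)]
      refine le_trans ?_ (hD1 ω)
      split
      · rw [abs_of_pos (ha01 k ω).1]; exact le_of_lt (ha01 k ω).2
      · simp
  have hstep : ∫ ω, FDP H0 P alpha t ω ∂μ ≤ ∫ ω, FDPstar H0 P alpha t ω ∂μ := by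
    have hfdp : (fun ω => FDP H0 P alpha t ω) = fun ω => ∑ k ∈ Finset.Iic t,
        (if k ∈ H0 ∧ P k ω ≤ alpha k ω then (1:ℝ) else 0)
          / max (numRejections P alpha t ω) 1 := by
      funext ω
      unfold FDP numFalseRejections
      rw [Finset.sum_div]
    have hfdps : (fun ω => FDPstar H0 P alpha t ω) = fun ω => ∑ k ∈ Finset.Iic t,
        (if k ∈ H0 then alpha k ω else 0) / max (numRejections P alpha t ω) 1 := by
      funext ω
      unfold FDPstar
      rw [Finset.sum_div]
    rw [hfdp, hfdps, integral_finset_sum _ (fun k _ => hterm1 k),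
      integral_finset_sum _ (fun k _ => hterm2 k)]
    apply Finset.sum_le_sum
    intro k hk
    by_cases hkH : k ∈ H0
    · have he1 : (fun ω => (if k ∈ H0 ∧ P k ω ≤ alpha k ω then (1:ℝ) else 0)
          / max (numRejections P alpha t ω) 1)
          = fun ω => (if P k ω ≤ alpha k ω then (1:ℝ) else 0)
          / max (numRejections P alpha t ω) 1 := by
        funext ω
        by_cases hc : P k ω ≤ alpha k ω <;> simp [hc, hkH]
      have he2 : (fun ω => (if k ∈ H0 then alpha k ω else 0)
          / max (numRejections P alpha t ω) 1)
          = fun ω => alpha k ω / max (numRejections P alpha t ω) 1 := by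
        funext ω; simp [hkH]
      rw [he1, he2]
      exact key_step μ P alpha H0 hPmeas hP01 hameas ha01 hindep hnull f hpred hmono
        t k hkH (Finset.mem_Iic.1 hk)
    · have he1 : (fun ω => (if k ∈ H0 ∧ P k ω ≤ alpha k ω then (1:ℝ) else 0)
          / max (numRejections P alpha t ω) 1) = fun _ => (0:ℝ) := by
        funext ω; simp [hkH]
      have he2 : (fun ω => (if k ∈ H0 then alpha k ω else 0)
          / max (numRejections P alpha t ω) 1) = fun _ => (0:ℝ) := by
        funext ω; simp [hkH]
      rw [he1, he2]
  refine hstep.trans ?_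
  have hFDPstarInt : Integrable (fun ω => FDPstar H0 P alpha t ω) μ := by
    apply (integrable_const ((t:ℝ)+1)).mono'
    · apply Measurable.aestronglyMeasurable
      unfold FDPstar
      apply Measurable.div _ hDmeas
      apply Finset.measurable_sum
      intro k _
      by_cases hk : k ∈ H0
      · simp only [hk, if_true]; exact hameas k
      · simp only [hk, if_false]; exact measurable_const
    · apply Filter.Eventually.of_forall
      intro ω
      rw [Real.norm_eq_abs]
      unfold FDPstar
      rw [abs_div, abs_of_pos (hD0 ω), div_le_iff₀ (hD0 ω)]
      have hnum : |∑ j ∈ Finset.Iic t, if j ∈ H0 then alpha j ω else 0| ≤ (t:ℝ)+1 := by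
        refine le_trans (Finset.abs_sum_le_sum_abs _ _) ?_
        have : ∀ j ∈ Finset.Iic t, |if j ∈ H0 then alpha j ω else 0| ≤ 1 := by
          intro j _
          split
          · rw [abs_of_pos (ha01 j ω).1]; exact le_of_lt (ha01 j ω).2
          · simp
        refine le_trans (Finset.sum_le_sum this) ?_
        simp [Nat.card_Iic]
      refine hnum.trans ?_
      nlinarith [hD1 ω, (hq.1 : (0:ℝ) < q)]
  calc ∫ ω, FDPstar H0 P alpha t ω ∂μ ≤ ∫ _, q ∂μ :=
        integral_mono_ae hFDPstarInt (integrable_const q) (hFDPstar t)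
    _ = q := by simp
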